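/- For every natural number n ≥ 1, sum_{k=0}^{floor((n-1)/2)} (1 - q^(2n-2k-1)) q^(k(2k+1)) / ([n-2k-1]_q! [2k+1]_q! prod_{i=1}^{n-1-2k}(1+q^i)) = sum_{k=0}^{floor(n/2)} (1 - q^(2n-2k)) q^(k(2k-1)) / ([n-2k]_q! [2k]_q! prod_{i=1}^{n-2k}(1+q^i)), as an identity of rational functions in q. -/

import Mathlib

noncomputable section
open Finset PowerSeries

abbrev Fq : Type := RatFunc ℚ

/-- The variable `q` as element of the field of rational functions `ℚ(q)`. -/
def qv : Fq := RatFunc.X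

/-- The q-integer `[m]_q = 1 + q + ... + q^(m-1)`. -/
def qInt (x : Fq) (m : ℕ) : Fq := ∑ i ∈ Finset.range m, x ^ i

/-- The q-factorial `[m]_q! = [1]_q [2]_q ⋯ [m]_q`. -/
def qFact (x : Fq) (m : ℕ) : Fq := ∏ i ∈ Finset.range m, qInt x (i + 1)

lemma one_sub_qv_pow_ne {m : ℕ} (hm : 1 ≤ m) : (1 : Fq) - qv ^ m ≠ 0 := by
  intro h
  have hX : (Polynomial.X : Polynomial ℚ) ^ m = 1 := by
    apply IsFractionRing.injective (Polynomial ℚ) (RatFunc ℚ)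
    rw [map_pow, map_one]
    have : qv ^ m = 1 := by linear_combination -h
    simpa [qv, RatFunc.algebraMap_X] using this
  have := congrArg Polynomial.natDegree hX
  simp [Polynomial.natDegree_X_pow] at this
  omega

lemma one_add_qv_pow_ne {m : ℕ} (hm : 1 ≤ m) : (1 : Fq) + qv ^ m ≠ 0 := by
  intro h
  have h2 : qv ^ m = -1 := by linear_combination h
  have hX : (Polynomial.X : Polynomial ℚ) ^ m = -1 := by
    apply IsFractionRing.injective (Polynomial ℚ) (RatFunc ℚ)
    rw [map_pow, map_neg, map_one]
    simpa [qv, RatFunc.algebraMap_X] using h2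
  have := congrArg Polynomial.natDegree hX
  simp [Polynomial.natDegree_X_pow] at this
  omega

lemma one_sub_qv_ne : (1 : Fq) - qv ≠ 0 := by
  have := one_sub_qv_pow_ne (m := 1) le_rfl
  simpa using this

def P (m : ℕ) : Fq := ∏ i ∈ Finset.range m, (1 - qv ^ (i + 1))
def E (m : ℕ) : Fq := ∏ i ∈ Finset.range m, (1 - qv ^ (2 * i + 2))

lemma P_ne (m : ℕ) : P m ≠ 0 :=
  Finset.prod_ne_zero_iff.2 fun i _ => one_sub_qv_pow_ne (by omega)

lemma E_ne (m : ℕ) : E m ≠ 0 :=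
  Finset.prod_ne_zero_iff.2 fun i _ => one_sub_qv_pow_ne (by omega)

lemma P_succ (m : ℕ) : P (m + 1) = P m * (1 - qv ^ (m + 1)) := Finset.prod_range_succ _ _
lemma E_succ (m : ℕ) : E (m + 1) = E m * (1 - qv ^ (2 * m + 2)) := Finset.prod_range_succ _ _

lemma qInt_mul (m : ℕ) : (1 - qv) * qInt qv m = 1 - qv ^ m := by
  have := geom_sum_mul (qv) m
  unfold qInt
  linear_combination -this

lemma P_eq (m : ℕ) : P m = (1 - qv) ^ m * qFact qv m := by
  unfold P qFact
  rw [Finset.pow_eq_prod_const, ← Finset.prod_mul_distrib]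
  exact Finset.prod_congr rfl fun i _ => (qInt_mul (i + 1)).symm

lemma E_eq (m : ℕ) : E m = P m * ∏ i ∈ Finset.Icc 1 m, (1 + qv ^ i) := by
  unfold E P
  rw [← Finset.Ico_add_one_right_eq_Icc, Finset.prod_Ico_eq_prod_range]
  simp only [Nat.add_sub_cancel]
  rw [← Finset.prod_mul_distrib]
  refine Finset.prod_congr rfl fun i _ => ?_
  have : qv ^ (2 * i + 2) = qv ^ (i + 1) * qv ^ (i + 1) := by rw [← pow_add]; ring_nf
  rw [this, add_comm 1 i]
  ring

lemma qFact_ne (m : ℕ) : qFact qv m ≠ 0 := by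
  intro h
  apply P_ne m
  rw [P_eq, h, mul_zero]

lemma prodIcc_ne (m : ℕ) : (∏ i ∈ Finset.Icc 1 m, (1 + qv ^ i)) ≠ 0 :=
  Finset.prod_ne_zero_iff.2 fun i hi => one_add_qv_pow_ne (Finset.mem_Icc.1 hi).1

def c (k : ℕ) : Fq := (-1 : Fq) ^ k * qv ^ (k * (k - 1) / 2)
def a (n k : ℕ) : Fq := c k * (1 - qv ^ (2 * n - k)) / (P k * E (n - k))

lemma tri_succ (k : ℕ) : (k + 1) * k / 2 = k * (k - 1) / 2 + k := by
  have e : (k + 1) * k / 2 = (k + 1).choose 2 := by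
    rw [Nat.choose_two_right, Nat.add_sub_cancel]
  have e2 : k * (k - 1) / 2 = k.choose 2 := (Nat.choose_two_right k).symm
  rw [e, e2, Nat.choose_succ_succ, Nat.choose_one_right, Nat.add_comm]

lemma c_succ (k : ℕ) : c (k + 1) = -(c k * qv ^ k) := by
  unfold c
  rw [Nat.add_sub_cancel, tri_succ, pow_add, pow_succ]
  ring

lemma a_eq (n k : ℕ) : a n k = c k * (1 - qv ^ (2 * n - k)) / (P k * E (n - k)) := rfl

lemma step (n : ℕ) :
    ∑ k ∈ Finset.range (n + 2), a (n + 1) k = ∑ k ∈ Finset.range (n + 1), a n k := by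
  have hsplit : ∀ k ∈ Finset.range (n + 2),
      a (n + 1) k = c k * (1 - qv ^ (2 * (n + 1 - k))) / (P k * E (n + 1 - k))
        + c k * (qv ^ (2 * (n + 1 - k)) * (1 - qv ^ k)) / (P k * E (n + 1 - k)) := by
    intro k hk
    have hk' : k ≤ n + 1 := by simpa using Nat.lt_succ_iff.1 (Finset.mem_range.1 hk)
    rw [a_eq, ← add_div]
    congr 1
    have h : 2 * (n + 1) - k = 2 * (n + 1 - k) + k := by omega
    rw [h, pow_add]
    ring
  rw [Finset.sum_congr rfl hsplit, Finset.sum_add_distrib]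
  rw [Finset.sum_range_succ (f := fun k => c k * (1 - qv ^ (2 * (n + 1 - k))) / (P k * E (n + 1 - k)))]
  rw [Finset.sum_range_succ' (f := fun k => c k * (qv ^ (2 * (n + 1 - k)) * (1 - qv ^ k)) / (P k * E (n + 1 - k)))]
  simp only [Nat.sub_self, mul_zero, pow_zero, sub_self, mul_one, zero_div, mul_zero,
    add_zero, zero_mul, mul_zero]
  rw [← Finset.sum_add_distrib]
  refine Finset.sum_congr rfl fun k hk => ?_
  have hk' : k ≤ n := Nat.lt_succ_iff.1 (Finset.mem_range.1 hk)
  have e1 : n + 1 - k = (n - k) + 1 := by omega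
  have e2 : n + 1 - (k + 1) = n - k := by omega
  have e3 : 2 * ((n - k) + 1) = 2 * (n - k) + 2 := by omega
  rw [e1, e2, e3, E_succ, P_succ, c_succ]
  have hE : E (n - k) ≠ 0 := E_ne _
  have hP : P k ≠ 0 := P_ne _
  have h1 : (1 : Fq) - qv ^ (2 * (n - k) + 2) ≠ 0 := one_sub_qv_pow_ne (by omega)
  have h2 : (1 : Fq) - qv ^ (k + 1) ≠ 0 := one_sub_qv_pow_ne (by omega)
  have hq : qv ^ (2 * (n - k)) * qv ^ k = qv ^ (2 * n - k) := by
    rw [← pow_add]; congr 1; omega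
  have t1 : c k * (1 - qv ^ (2 * (n - k) + 2)) / (P k * (E (n - k) * (1 - qv ^ (2 * (n - k) + 2))))
      = c k / (P k * E (n - k)) := by
    field_simp
  have t2 : -(c k * qv ^ k) * (qv ^ (2 * (n - k)) * (1 - qv ^ (k + 1))) /
        (P k * (1 - qv ^ (k + 1)) * E (n - k))
      = -(c k * qv ^ (2 * n - k)) / (P k * E (n - k)) := by
    rw [← hq]
    field_simp
  rw [t1, t2, a_eq, ← add_div]
  congr 1
  ring

lemma Spe_zero (n : ℕ) : ∑ k ∈ Finset.range (n + 1), a n k = 0 := by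
  induction n with
  | zero => simp [a_eq, E, P, c]
  | succ n ih => rw [step, ih]

lemma sum_even_odd (f : ℕ → Fq) (n : ℕ) :
    ∑ k ∈ Finset.range n, f k =
      (∑ k ∈ Finset.range ((n + 1) / 2), f (2 * k)) +
        ∑ k ∈ Finset.range (n / 2), f (2 * k + 1) := by
  induction n with
  | zero => simp
  | succ n ih =>
    rw [Finset.sum_range_succ, ih]
    obtain ⟨m, hm | hm⟩ := Nat.even_or_odd' n
    · subst hm
      rw [show (2 * m + 1 + 1) / 2 = m + 1 by omega, show (2 * m + 1) / 2 = m by omega,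
        show 2 * m / 2 = m by omega, Finset.sum_range_succ]
      ring
    · subst hm
      rw [show (2 * m + 1 + 1 + 1) / 2 = m + 1 by omega, show (2 * m + 1 + 1) / 2 = m + 1 by omega,
        show (2 * m + 1) / 2 = m by omega, Finset.sum_range_succ (f := fun k => f (2 * k + 1))]
      ring

lemma c_odd (k : ℕ) : c (2 * k + 1) = -(qv ^ (k * (2 * k + 1))) := by
  unfold c
  rw [Nat.add_sub_cancel]
  have h1 : (2 * k + 1) * (2 * k) / 2 = k * (2 * k + 1) := by
    rw [show (2 * k + 1) * (2 * k) = 2 * (k * (2 * k + 1)) by ring,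
      Nat.mul_div_cancel_left _ (by norm_num)]
  rw [h1, Odd.neg_one_pow ⟨k, by ring⟩]
  ring

lemma c_even (k : ℕ) : c (2 * k) = qv ^ (k * (2 * k - 1)) := by
  unfold c
  have h1 : 2 * k * (2 * k - 1) / 2 = k * (2 * k - 1) := by
    rw [Nat.mul_assoc, Nat.mul_div_cancel_left _ (by norm_num)]
  rw [h1, Even.neg_one_pow ⟨k, by ring⟩, one_mul]

lemma termL (n k : ℕ) (h : 2 * k + 1 ≤ n) :
    (1 - qv ^ (2 * n - 2 * k - 1)) * qv ^ (k * (2 * k + 1)) /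
        (qFact qv (n - 2 * k - 1) * qFact qv (2 * k + 1) *
          ∏ i ∈ Finset.Icc 1 (n - 1 - 2 * k), (1 + qv ^ i))
      = -((1 - qv) ^ n * a n (2 * k + 1)) := by
  rw [a_eq, c_odd, show 2 * n - (2 * k + 1) = 2 * n - 2 * k - 1 by omega,
    show n - (2 * k + 1) = n - 2 * k - 1 by omega,
    show n - 1 - 2 * k = n - 2 * k - 1 by omega]
  have hpow : (1 - qv) ^ (2 * k + 1) * (1 - qv) ^ (n - 2 * k - 1) = (1 - qv) ^ n := by
    rw [← pow_add]; congr 1; omega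
  have hPE : P (2 * k + 1) * E (n - 2 * k - 1)
      = (1 - qv) ^ n * (qFact qv (n - 2 * k - 1) * qFact qv (2 * k + 1) *
          ∏ i ∈ Finset.Icc 1 (n - 2 * k - 1), (1 + qv ^ i)) := by
    rw [E_eq, P_eq, P_eq, ← hpow]
    ring
  rw [hPE]
  have hB : ((1 : Fq) - qv) ^ n ≠ 0 := pow_ne_zero _ one_sub_qv_ne
  have hD : qFact qv (n - 2 * k - 1) * qFact qv (2 * k + 1) *
      ∏ i ∈ Finset.Icc 1 (n - 2 * k - 1), (1 + qv ^ i) ≠ 0 :=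
    mul_ne_zero (mul_ne_zero (qFact_ne _) (qFact_ne _)) (prodIcc_ne _)
  field_simp

lemma termR (n k : ℕ) (h : 2 * k ≤ n) :
    (1 - qv ^ (2 * n - 2 * k)) * qv ^ (k * (2 * k - 1)) /
        (qFact qv (n - 2 * k) * qFact qv (2 * k) *
          ∏ i ∈ Finset.Icc 1 (n - 2 * k), (1 + qv ^ i))
      = (1 - qv) ^ n * a n (2 * k) := by
  rw [a_eq, c_even]
  have hpow : (1 - qv) ^ (2 * k) * (1 - qv) ^ (n - 2 * k) = (1 - qv) ^ n := by
    rw [← pow_add]; congr 1; omega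
  have hPE : P (2 * k) * E (n - 2 * k)
      = (1 - qv) ^ n * (qFact qv (n - 2 * k) * qFact qv (2 * k) *
          ∏ i ∈ Finset.Icc 1 (n - 2 * k), (1 + qv ^ i)) := by
    rw [E_eq, P_eq, P_eq, ← hpow]
    ring
  rw [hPE]
  have hB : ((1 : Fq) - qv) ^ n ≠ 0 := pow_ne_zero _ one_sub_qv_ne
  have hD : qFact qv (n - 2 * k) * qFact qv (2 * k) *
      ∏ i ∈ Finset.Icc 1 (n - 2 * k), (1 + qv ^ i) ≠ 0 :=
    mul_ne_zero (mul_ne_zero (qFact_ne _) (qFact_ne _)) (prodIcc_ne _)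
  field_simp

theorem odd_even_continuant_identity (n : ℕ) (hn : 1 ≤ n) :
    ∑ k ∈ Finset.range ((n - 1) / 2 + 1),
        (1 - qv ^ (2 * n - 2 * k - 1)) * qv ^ (k * (2 * k + 1)) /
          (qFact qv (n - 2 * k - 1) * qFact qv (2 * k + 1) *
            ∏ i ∈ Finset.Icc 1 (n - 1 - 2 * k), (1 + qv ^ i)) =
    ∑ k ∈ Finset.range (n / 2 + 1),
        (1 - qv ^ (2 * n - 2 * k)) * qv ^ (k * (2 * k - 1)) /
          (qFact qv (n - 2 * k) * qFact qv (2 * k) *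
            ∏ i ∈ Finset.Icc 1 (n - 2 * k), (1 + qv ^ i)) := by
  have hL : ∀ k ∈ Finset.range ((n - 1) / 2 + 1),
      (1 - qv ^ (2 * n - 2 * k - 1)) * qv ^ (k * (2 * k + 1)) /
          (qFact qv (n - 2 * k - 1) * qFact qv (2 * k + 1) *
            ∏ i ∈ Finset.Icc 1 (n - 1 - 2 * k), (1 + qv ^ i))
        = -((1 - qv) ^ n * a n (2 * k + 1)) := by
    intro k hk
    have := Finset.mem_range.1 hk
    exact termL n k (by omega)
  have hR : ∀ k ∈ Finset.range (n / 2 + 1),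
      (1 - qv ^ (2 * n - 2 * k)) * qv ^ (k * (2 * k - 1)) /
          (qFact qv (n - 2 * k) * qFact qv (2 * k) *
            ∏ i ∈ Finset.Icc 1 (n - 2 * k), (1 + qv ^ i))
        = (1 - qv) ^ n * a n (2 * k) := by
    intro k hk
    have := Finset.mem_range.1 hk
    exact termR n k (by omega)
  rw [Finset.sum_congr rfl hL, Finset.sum_congr rfl hR]
  have hsp := sum_even_odd (a n) (n + 1)
  rw [Spe_zero n, show (n + 1 + 1) / 2 = n / 2 + 1 by omega,
    show (n + 1) / 2 = (n - 1) / 2 + 1 by omega] at hsp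
  rw [← Finset.mul_sum]
  have : ∑ k ∈ Finset.range ((n - 1) / 2 + 1), -((1 - qv) ^ n * a n (2 * k + 1))
      = -((1 - qv) ^ n * ∑ k ∈ Finset.range ((n - 1) / 2 + 1), a n (2 * k + 1)) := by
    rw [Finset.mul_sum, Finset.sum_neg_distrib]
  rw [this]
  linear_combination ((1 - qv) ^ n) * hsp
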